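/- In a 1-player game (G_τ, π) for Even (Odd's strategy fixed), an odd cycle (a cycle whose maximum priority is odd) admits no finite feasible node labeling; equivalently, any node labeling feasible on an odd cycle assigns ⊤ to every node of the cycle. -/

import Mathlib

/-- The `p`-truncation of a label: a leaf of an ordered tree of height `h` is an `h`-tuple
`(ξ_{2h-1}, ξ_{2h-3}, …, ξ_1)` (a list of length `h`, lexicographically ordered); the
`p`-truncation deletes the components with index `< p` (for odd `p`, index `< p`; for even
`p`, index `≤ p`), i.e. keeps the first `h - p/2` entries; and `⊤|_p = ⊤`. -/
def trunc {M : Type*} (h p : ℕ) (x : WithTop (List M)) : WithTop (List M) :=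
  WithTop.map (List.take (h - p / 2)) x

/-- The progress-measure condition for an arc with tail-priority `p`, tail label `x` and
head label `y` (labels in `L(T) ∪ {⊤}` for a tree `T` of height `h`): if `p` is even then
`x|_p ≥ y|_p`; if `p` is odd then `x|_p > y|_p` or both labels are `⊤`.  An arc whose
labels satisfy this condition is *non-violated*. -/
def NV {M : Type*} [LinearOrder M] (h p : ℕ) (x y : WithTop (List M)) : Prop :=
  if Even p then trunc h p y ≤ trunc h p x
  else trunc h p y < trunc h p x ∨ (x = ⊤ ∧ y = ⊤)

private lemma lex_of_lex_take {M : Type*} [LinearOrder M] :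
    ∀ (k : ℕ) (l₁ l₂ : List M), List.Lex (· < ·) (l₁.take k) (l₂.take k) →
      List.Lex (· < ·) l₁ l₂ := by
  intro k
  induction k with
  | zero => intro l₁ l₂ hl; simp at hl
  | succ k ih =>
    intro l₁ l₂ hl
    match l₁, l₂ with
    | _, [] => simp at hl
    | [], b :: t₂ => exact List.Lex.nil
    | a :: t₁, b :: t₂ =>
      simp only [List.take_succ_cons] at hl
      cases hl with
      | rel h => exact List.Lex.rel h
      | cons h => exact List.Lex.cons (ih _ _ h)

private lemma take_le_take {M : Type*} [LinearOrder M] (k : ℕ) (l₁ l₂ : List M)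
    (hle : l₁ ≤ l₂) : l₁.take k ≤ l₂.take k := by
  by_contra hc
  exact absurd ((lex_of_lex_take k _ _ (not_le.mp hc) : l₂ < l₁)) (not_lt.mpr hle)

private lemma trunc_mono {M : Type*} [LinearOrder M] (h p P : ℕ) (hpP : p ≤ P)
    (x y : WithTop (List M)) (hxy : trunc h p y ≤ trunc h p x) :
    trunc h P y ≤ trunc h P x := by
  match x, y with
  | ⊤, _ => exact le_top
  | (lx : List M), ⊤ =>
      rw [trunc, trunc, WithTop.map_top, WithTop.map_coe] at hxy
      exact absurd hxy (by simp)
  | (lx : List M), (ly : List M) =>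
      rw [trunc, trunc, WithTop.map_coe, WithTop.map_coe, WithTop.coe_le_coe] at hxy
      rw [trunc, trunc, WithTop.map_coe, WithTop.map_coe, WithTop.coe_le_coe]
      have h1 : lx.take (h - P / 2) = (lx.take (h - p / 2)).take (h - P / 2) := by
        rw [List.take_take, min_eq_left (by omega)]
      have h2 : ly.take (h - P / 2) = (ly.take (h - p / 2)).take (h - P / 2) := by
        rw [List.take_take, min_eq_left (by omega)]
      rw [h1, h2]
      exact take_le_take _ _ _ hxy

open Fin.NatCast

/-- In a 1-player game for Even, an odd cycle (a cycle whose maximum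
priority `P` is odd) admits no finite feasible node labeling: any node labeling that is
feasible on the cycle (all arcs of the cycle non-violated) assigns `⊤` to every node of
the cycle. -/
theorem stmt_7 {V M : Type*} [LinearOrder M]
    (d h : ℕ) (hd : d = 2 * h)
    (π : V → ℕ) (hπ : ∀ v, 1 ≤ π v ∧ π v ≤ d)
    (μ : V → WithTop (List M))
    (hlen : ∀ (v : V) (ξ : List M), μ v = (ξ : WithTop (List M)) → ξ.length = h)
    (n : ℕ) (c : Fin (n + 1) → V)
    (hfeas : ∀ i, NV h (π (c i)) (μ (c i)) (μ (c (i + 1))))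
    (P : ℕ) (hub : ∀ i, π (c i) ≤ P) (hmem : ∃ i, π (c i) = P)
    (hodd : Odd P) :
    ∀ i, μ (c i) = ⊤ := by
  set f : Fin (n + 1) → WithTop (List M) := fun i => trunc h P (μ (c i)) with hf
  -- each step is ≤
  have hstep : ∀ i, f (i + 1) ≤ f i := by
    intro i
    have hNV := hfeas i
    unfold NV at hNV
    have hweak : trunc h (π (c i)) (μ (c (i + 1))) ≤ trunc h (π (c i)) (μ (c i)) := by
      split_ifs at hNV with he
      · exact hNV
      · rcases hNV with hlt | ⟨hx, hy⟩
        · exact le_of_lt hlt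
        · rw [hx, hy]
    exact trunc_mono h (π (c i)) P (hub i) _ _ hweak
  -- f ∘ cast from ℕ is antitone and wraps, so constant
  have hcast : ∀ k : ℕ, f ((k + 1 : ℕ) : Fin (n + 1)) ≤ f ((k : ℕ) : Fin (n + 1)) := by
    intro k
    have : ((k + 1 : ℕ) : Fin (n + 1)) = ((k : ℕ) : Fin (n + 1)) + 1 := by
      push_cast; ring
    rw [this]; exact hstep _
  have hanti : ∀ k l : ℕ, k ≤ l → f ((l : ℕ) : Fin (n + 1)) ≤ f ((k : ℕ) : Fin (n + 1)) := by
    intro k l hkl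
    induction l with
    | zero => simp_all
    | succ l ih =>
      rcases Nat.lt_or_ge k (l + 1) with hlt | hge
      · exact le_trans (hcast l) (ih (by omega))
      · have : k = l + 1 := by omega
        subst this; exact le_rfl
  have hwrap : ((n + 1 : ℕ) : Fin (n + 1)) = ((0 : ℕ) : Fin (n + 1)) := by
    simp
  have hconst : ∀ i : Fin (n + 1), f i = f 0 := by
    intro i
    have h1 : f i ≤ f ((0 : ℕ) : Fin (n + 1)) := by
      have := hanti 0 i.val (Nat.zero_le _)
      rwa [Fin.cast_val_eq_self] at this
    have h2 : f ((0 : ℕ) : Fin (n + 1)) ≤ f i := by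
      have := hanti i.val (n + 1) (by omega)
      rw [hwrap] at this
      rwa [Fin.cast_val_eq_self] at this
    have h0 : ((0 : ℕ) : Fin (n + 1)) = 0 := by simp
    rw [h0] at h1 h2
    exact le_antisymm h1 h2
  -- at the max-priority arc, both ends are ⊤
  obtain ⟨i₀, hi₀⟩ := hmem
  have hNV := hfeas i₀
  unfold NV at hNV
  rw [hi₀, if_neg (by simpa using hodd)] at hNV
  have htop : μ (c i₀) = ⊤ := by
    rcases hNV with hlt | ⟨hx, _⟩
    · exfalso
      have : f (i₀ + 1) = f i₀ := (hconst _).trans (hconst i₀).symm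
      rw [hf] at this
      simp only at this
      exact absurd this (ne_of_lt hlt)
    · exact hx
  -- hence f 0 = ⊤ and all μ are ⊤
  have hf0 : f 0 = ⊤ := by
    rw [← hconst i₀, hf]; simp only; rw [htop]; rfl
  intro i
  have : f i = ⊤ := (hconst i).trans hf0
  rw [hf] at this
  simp only at this
  cases hμ : μ (c i) with
  | top => rfl
  | coe l =>
    rw [hμ, trunc, WithTop.map_coe] at this
    exact absurd this (WithTop.coe_ne_top)
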